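/- For every constant c > 0, the function (m, ρ) ↦ K(m, ρ) + c · I(ρ) is strictly convex on the convex set {(m, ρ) | m : E → ℝ, ρ_i > 0 for all i ∈ V, Σ_{i∈V} ρ_i = 1}. -/

import Mathlib

/-- The discrete Fisher information on a graph:
`I(ρ) = Σ_{{i,j} ∈ E} (log ρ_i − log ρ_j)² (ρ_i + ρ_j)/2`,
where the sum runs over the edges of the graph, each unordered edge counted once. -/
noncomputable def discreteFisher {V : Type*} [Fintype V] [DecidableEq V]
    (G : SimpleGraph V) [DecidableRel G.Adj] (ρ : V → ℝ) : ℝ :=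
  ∑ e ∈ G.edgeFinset,
    Sym2.lift ⟨fun i j => (Real.log (ρ i) - Real.log (ρ j)) ^ 2 * (ρ i + ρ j) / 2,
      fun i j => by ring⟩ e

/-- The discrete kinetic energy `K(m, ρ) = Σ_{e={i,j}∈E} 2 m_e² / (ρ_i + ρ_j)`,
where `m` is indexed by the edges of the graph (each unordered edge counted once). -/
noncomputable def discreteKinetic {V : Type*} [Fintype V] [DecidableEq V]
    (G : SimpleGraph V) [DecidableRel G.Adj]
    (m : G.edgeSet → ℝ) (ρ : V → ℝ) : ℝ :=
  ∑ e : G.edgeSet,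
    2 * m e ^ 2 / Sym2.lift ⟨fun i j => ρ i + ρ j, fun i j => by ring⟩ (e : Sym2 V)

section Aux
open Real Set

noncomputable def gfun (t : ℝ) : ℝ := (Real.log t)^2 * (t+1)/2
noncomputable def gfun' (t : ℝ) : ℝ := Real.log t + (Real.log t)^2/2 + Real.log t / t
noncomputable def gfun'' (t : ℝ) : ℝ := 1/t + Real.log t / t + (1 - Real.log t)/t^2

lemma hasDerivAt_gfun {t : ℝ} (ht : 0 < t) : HasDerivAt gfun (gfun' t) t := by
  have hl : HasDerivAt Real.log t⁻¹ t := Real.hasDerivAt_log (ne_of_gt ht)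
  have h2 := (((hl.pow 2).mul ((hasDerivAt_id t).add_const 1)).div_const 2)
  simp only [id_eq] at h2
  refine HasDerivAt.congr_deriv h2 ?_
  have ht' := ne_of_gt ht
  unfold gfun'
  norm_num
  field_simp
  ring

lemma hasDerivAt_gfun' {t : ℝ} (ht : 0 < t) : HasDerivAt gfun' (gfun'' t) t := by
  have hl : HasDerivAt Real.log t⁻¹ t := Real.hasDerivAt_log (ne_of_gt ht)
  have h2 := (hl.add ((hl.pow 2).div_const 2)).add (hl.div (hasDerivAt_id t) (ne_of_gt ht))
  simp only [id_eq] at h2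
  refine HasDerivAt.congr_deriv h2 ?_
  have ht' := ne_of_gt ht
  unfold gfun''
  norm_num
  field_simp

lemma gfun''_pos {t : ℝ} (ht : 0 < t) : 0 < gfun'' t := by
  unfold gfun''
  have key : 0 ≤ (t - 1) * Real.log t := by
    rcases le_or_gt 1 t with h | h
    · exact mul_nonneg (by linarith) (Real.log_nonneg h)
    · have := Real.log_nonpos (le_of_lt ht) h.le
      nlinarith
  have h2 : 0 < t^2 := by positivity
  rw [div_add_div _ _ (ne_of_gt ht) (ne_of_gt ht), div_add_div _ _ (ne_of_gt (by positivity : (0:ℝ) < t*t)) (ne_of_gt h2)]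
  apply div_pos
  · nlinarith
  · positivity

lemma gfun_strictConvex : StrictConvexOn ℝ (Ioi (0:ℝ)) gfun := by
  apply strictConvexOn_of_deriv2_pos (convex_Ioi 0)
  · apply ContinuousOn.div_const
    apply ContinuousOn.mul
    · exact (Real.continuousOn_log.mono (by intro x hx; exact ne_of_gt hx)).pow 2
    · fun_prop
  · intro t ht
    rw [interior_Ioi] at ht
    have hev : deriv gfun =ᶠ[nhds t] gfun' := by
      filter_upwards [isOpen_Ioi.mem_nhds ht] with s hs
      exact (hasDerivAt_gfun hs).deriv
    have : deriv^[2] gfun t = deriv (deriv gfun) t := rfl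
    rw [this, hev.deriv_eq, (hasDerivAt_gfun' ht).deriv]
    exact gfun''_pos ht


noncomputable def Flog (x y : ℝ) : ℝ := (Real.log x - Real.log y)^2 * (x + y)/2

lemma Flog_eq {x y : ℝ} (hx : 0 < x) (hy : 0 < y) : Flog x y = y * gfun (x/y) := by
  unfold Flog gfun
  rw [Real.log_div (ne_of_gt hx) (ne_of_gt hy)]
  field_simp

lemma Flog_combo_lt (x1 y1 x2 y2 a b : ℝ) (hx1 : 0 < x1) (hy1 : 0 < y1) (hx2 : 0 < x2)
    (hy2 : 0 < y2) (ha : 0 < a) (hb : 0 < b) (hab : a + b = 1) (hne : x1 * y2 ≠ x2 * y1) :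
    Flog (a*x1+b*x2) (a*y1+b*y2) < a * Flog x1 y1 + b * Flog x2 y2 := by
  have hY : 0 < a*y1+b*y2 := by positivity
  have hX : 0 < a*x1+b*x2 := by positivity
  have ht : x1/y1 ≠ x2/y2 := by
    intro h
    exact hne ((div_eq_div_iff (ne_of_gt hy1) (ne_of_gt hy2)).mp h)
  have hw : a*y1/(a*y1+b*y2) + b*y2/(a*y1+b*y2) = 1 := by field_simp
  have key := gfun_strictConvex.2 (Set.mem_Ioi.mpr (by positivity : (0:ℝ) < x1/y1))
    (Set.mem_Ioi.mpr (by positivity : (0:ℝ) < x2/y2)) ht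
    (by positivity : (0:ℝ) < a*y1/(a*y1+b*y2)) (by positivity : (0:ℝ) < b*y2/(a*y1+b*y2)) hw
  simp only [smul_eq_mul] at key
  have harg : a*y1/(a*y1+b*y2) * (x1/y1) + b*y2/(a*y1+b*y2) * (x2/y2)
      = (a*x1+b*x2)/(a*y1+b*y2) := by
    field_simp
  rw [harg] at key
  have := mul_lt_mul_of_pos_left key hY
  rw [Flog_eq hX hY, Flog_eq hx1 hy1, Flog_eq hx2 hy2]
  calc (a*y1+b*y2) * gfun ((a*x1+b*x2)/(a*y1+b*y2))
      < (a*y1+b*y2) * (a*y1/(a*y1+b*y2) * gfun (x1/y1) + b*y2/(a*y1+b*y2) * gfun (x2/y2)) := this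
    _ = a * (y1 * gfun (x1/y1)) + b * (y2 * gfun (x2/y2)) := by field_simp

lemma Flog_combo_le (x1 y1 x2 y2 a b : ℝ) (hx1 : 0 < x1) (hy1 : 0 < y1) (hx2 : 0 < x2)
    (hy2 : 0 < y2) (ha : 0 < a) (hb : 0 < b) (hab : a + b = 1) :
    Flog (a*x1+b*x2) (a*y1+b*y2) ≤ a * Flog x1 y1 + b * Flog x2 y2 := by
  rcases eq_or_ne (x1 * y2) (x2 * y1) with h | h
  · -- x1/y1 = x2/y2, equality case via ConvexOn
    have hY : 0 < a*y1+b*y2 := by positivity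
    have hX : 0 < a*x1+b*x2 := by positivity
    have hw : a*y1/(a*y1+b*y2) + b*y2/(a*y1+b*y2) = 1 := by field_simp
    have key := gfun_strictConvex.convexOn.2 (Set.mem_Ioi.mpr (by positivity : (0:ℝ) < x1/y1))
      (Set.mem_Ioi.mpr (by positivity : (0:ℝ) < x2/y2))
      (by positivity : (0:ℝ) ≤ a*y1/(a*y1+b*y2)) (by positivity : (0:ℝ) ≤ b*y2/(a*y1+b*y2)) hw
    simp only [smul_eq_mul] at key
    have harg : a*y1/(a*y1+b*y2) * (x1/y1) + b*y2/(a*y1+b*y2) * (x2/y2)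
        = (a*x1+b*x2)/(a*y1+b*y2) := by
      field_simp
    rw [harg] at key
    have := mul_le_mul_of_nonneg_left key hY.le
    rw [Flog_eq hX hY, Flog_eq hx1 hy1, Flog_eq hx2 hy2]
    calc (a*y1+b*y2) * gfun ((a*x1+b*x2)/(a*y1+b*y2))
        ≤ (a*y1+b*y2) * (a*y1/(a*y1+b*y2) * gfun (x1/y1) + b*y2/(a*y1+b*y2) * gfun (x2/y2)) := this
      _ = a * (y1 * gfun (x1/y1)) + b * (y2 * gfun (x2/y2)) := by field_simp
  · exact (Flog_combo_lt x1 y1 x2 y2 a b hx1 hy1 hx2 hy2 ha hb hab h).le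

lemma kin_diff (M N s1 s2 a b : ℝ) (hs1 : 0 < s1) (hs2 : 0 < s2) (ha : 0 < a) (hb : 0 < b)
    (hab : a + b = 1) :
    a*(2*M^2/s1) + b*(2*N^2/s2) - 2*(a*M+b*N)^2/(a*s1+b*s2)
      = (a*b*2*(M*s2-N*s1)^2)/(s1*s2*(a*s1+b*s2)) := by
  have hb' : b = 1 - a := by linarith
  subst hb'
  have hs : (0:ℝ) < a*s1+(1-a)*s2 := by positivity
  field_simp
  ring

lemma kin_le (M N s1 s2 a b : ℝ) (hs1 : 0 < s1) (hs2 : 0 < s2) (ha : 0 < a) (hb : 0 < b)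
    (hab : a + b = 1) :
    2*(a*M+b*N)^2/(a*s1+b*s2) ≤ a*(2*M^2/s1) + b*(2*N^2/s2) := by
  have h := kin_diff M N s1 s2 a b hs1 hs2 ha hb hab
  have h2 : 0 ≤ (a*b*2*(M*s2-N*s1)^2)/(s1*s2*(a*s1+b*s2)) := by positivity
  linarith

lemma kin_lt (M N s1 s2 a b : ℝ) (hs1 : 0 < s1) (hs2 : 0 < s2) (ha : 0 < a) (hb : 0 < b)
    (hab : a + b = 1) (hne : M*s2 ≠ N*s1) :
    2*(a*M+b*N)^2/(a*s1+b*s2) < a*(2*M^2/s1) + b*(2*N^2/s2) := by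
  have h := kin_diff M N s1 s2 a b hs1 hs2 ha hb hab
  have hz : M*s2 - N*s1 ≠ 0 := sub_ne_zero.mpr hne
  have h2 : 0 < (a*b*2*(M*s2-N*s1)^2)/(s1*s2*(a*s1+b*s2)) := by positivity
  linarith

lemma exists_adj_ratio_ne {V : Type*} [Fintype V] [DecidableEq V] [Nonempty V]
    (G : SimpleGraph V) (hG : G.Connected) (ρ τ : V → ℝ)
    (hρ : ∀ i, 0 < ρ i) (hτ : ∀ i, 0 < τ i)
    (hρs : ∑ i, ρ i = 1) (hτs : ∑ i, τ i = 1) (hne : ρ ≠ τ) :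
    ∃ i j, G.Adj i j ∧ ρ i * τ j ≠ ρ j * τ i := by
  by_contra hcon
  push_neg at hcon
  have key : ∀ i j : V, ρ i * τ j = ρ j * τ i := by
    intro i j
    obtain ⟨w⟩ := hG.preconnected i j
    induction w with
    | nil => ring
    | cons hadj p ih =>
      rename_i u v w
      have h1 := hcon u v hadj
      have h2 : ρ u * τ w * τ v = ρ w * τ u * τ v := by
        linear_combination τ w * h1 + τ u * ih
      exact mul_right_cancel₀ (ne_of_gt (hτ v)) h2
  apply hne
  funext i
  calc ρ i = ρ i * ∑ j, τ j := by rw [hτs]; ring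
    _ = ∑ j, ρ i * τ j := Finset.mul_sum _ _ _
    _ = ∑ j, ρ j * τ i := Finset.sum_congr rfl (fun j _ => key i j)
    _ = (∑ j, ρ j) * τ i := (Finset.sum_mul _ _ _).symm
    _ = τ i := by rw [hρs]; ring

end Aux

section Main
variable {V : Type*} [Fintype V] [DecidableEq V] (G : SimpleGraph V) [DecidableRel G.Adj]

lemma fisher_combo_le (ρ τ : V → ℝ) (hρ : ∀ i, 0 < ρ i) (hτ : ∀ i, 0 < τ i)
    (a b : ℝ) (ha : 0 < a) (hb : 0 < b) (hab : a + b = 1) :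
    discreteFisher G (fun i => a * ρ i + b * τ i) ≤
      a * discreteFisher G ρ + b * discreteFisher G τ := by
  unfold discreteFisher
  rw [Finset.mul_sum, Finset.mul_sum, ← Finset.sum_add_distrib]
  apply Finset.sum_le_sum
  intro e he
  induction e using Sym2.ind with
  | _ i j =>
    simp only [Sym2.lift_mk]
    exact Flog_combo_le (ρ i) (ρ j) (τ i) (τ j) a b (hρ i) (hρ j) (hτ i) (hτ j) ha hb hab

lemma fisher_combo_lt (hG : G.Connected) [Nonempty V] (ρ τ : V → ℝ)
    (hρ : ∀ i, 0 < ρ i) (hτ : ∀ i, 0 < τ i)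
    (hρs : ∑ i, ρ i = 1) (hτs : ∑ i, τ i = 1) (hne : ρ ≠ τ)
    (a b : ℝ) (ha : 0 < a) (hb : 0 < b) (hab : a + b = 1) :
    discreteFisher G (fun i => a * ρ i + b * τ i) <
      a * discreteFisher G ρ + b * discreteFisher G τ := by
  obtain ⟨i0, j0, hadj, hr⟩ := exists_adj_ratio_ne G hG ρ τ hρ hτ hρs hτs hne
  unfold discreteFisher
  rw [Finset.mul_sum, Finset.mul_sum, ← Finset.sum_add_distrib]
  apply Finset.sum_lt_sum
  · intro e he
    induction e using Sym2.ind with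
    | _ i j =>
      simp only [Sym2.lift_mk]
      exact Flog_combo_le (ρ i) (ρ j) (τ i) (τ j) a b (hρ i) (hρ j) (hτ i) (hτ j) ha hb hab
  · refine ⟨s(i0, j0), ?_, ?_⟩
    · rw [SimpleGraph.mem_edgeFinset, SimpleGraph.mem_edgeSet]; exact hadj
    · simp only [Sym2.lift_mk]
      refine Flog_combo_lt (ρ i0) (ρ j0) (τ i0) (τ j0) a b (hρ i0) (hρ j0) (hτ i0) (hτ j0)
        ha hb hab ?_
      exact fun h => hr (h.trans (mul_comm _ _))

lemma kinetic_combo_le (m n : G.edgeSet → ℝ) (ρ τ : V → ℝ)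
    (hρ : ∀ i, 0 < ρ i) (hτ : ∀ i, 0 < τ i)
    (a b : ℝ) (ha : 0 < a) (hb : 0 < b) (hab : a + b = 1) :
    discreteKinetic G (fun e => a * m e + b * n e) (fun i => a * ρ i + b * τ i) ≤
      a * discreteKinetic G m ρ + b * discreteKinetic G n τ := by
  unfold discreteKinetic
  rw [Finset.mul_sum, Finset.mul_sum, ← Finset.sum_add_distrib]
  apply Finset.sum_le_sum
  rintro ⟨e, he⟩ -
  induction e using Sym2.ind with
  | _ i j =>
    simp only [Sym2.lift_mk]
    have hd : (a * ρ i + b * τ i) + (a * ρ j + b * τ j)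
        = a * (ρ i + ρ j) + b * (τ i + τ j) := by ring
    rw [hd]
    exact kin_le _ _ _ _ a b (by have := hρ i; have := hρ j; linarith)
      (by have := hτ i; have := hτ j; linarith) ha hb hab

lemma kinetic_combo_lt (m n : G.edgeSet → ℝ) (ρ : V → ℝ)
    (hρ : ∀ i, 0 < ρ i) (hmn : m ≠ n)
    (a b : ℝ) (ha : 0 < a) (hb : 0 < b) (hab : a + b = 1) :
    discreteKinetic G (fun e => a * m e + b * n e) (fun i => a * ρ i + b * ρ i) <
      a * discreteKinetic G m ρ + b * discreteKinetic G n ρ := by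
  obtain ⟨e0, h0⟩ := Function.ne_iff.mp hmn
  unfold discreteKinetic
  rw [Finset.mul_sum, Finset.mul_sum, ← Finset.sum_add_distrib]
  apply Finset.sum_lt_sum
  · rintro ⟨e, he⟩ -
    induction e using Sym2.ind with
    | _ i j =>
      simp only [Sym2.lift_mk]
      have hd : (a * ρ i + b * ρ i) + (a * ρ j + b * ρ j)
          = a * (ρ i + ρ j) + b * (ρ i + ρ j) := by ring
      rw [hd]
      exact kin_le _ _ _ _ a b (by have := hρ i; have := hρ j; linarith)
        (by have := hρ i; have := hρ j; linarith) ha hb hab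
  · refine ⟨e0, Finset.mem_univ _, ?_⟩
    obtain ⟨e, he⟩ := e0
    revert h0
    induction e using Sym2.ind with
    | _ i j =>
      intro h0
      simp only [Sym2.lift_mk]
      have hs : 0 < ρ i + ρ j := by have := hρ i; have := hρ j; linarith
      have hd : (a * ρ i + b * ρ i) + (a * ρ j + b * ρ j)
          = a * (ρ i + ρ j) + b * (ρ i + ρ j) := by ring
      rw [hd]
      refine kin_lt _ _ _ _ a b hs hs ha hb hab ?_
      intro hcontra
      exact h0 (mul_right_cancel₀ (ne_of_gt hs) hcontra)

end Main

theorem kinetic_plus_fisher_strictly_convex {V : Type*} [Fintype V] [DecidableEq V]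
    [Nonempty V] (G : SimpleGraph V) [DecidableRel G.Adj] (hG : G.Connected)
    (c : ℝ) (hc : 0 < c) :
    StrictConvexOn ℝ
      {p : (G.edgeSet → ℝ) × (V → ℝ) | (∀ i, 0 < p.2 i) ∧ ∑ i, p.2 i = 1}
      (fun p => discreteKinetic G p.1 p.2 + c * discreteFisher G p.2) := by
  constructor
  · -- convexity of the set
    intro p hp q hq a b ha hb hab
    refine ⟨fun i => ?_, ?_⟩
    · have h1 := hp.1 i
      have h2 := hq.1 i
      simp only [Prod.snd_add, Prod.smul_snd, Pi.add_apply, Pi.smul_apply, smul_eq_mul]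
      rcases eq_or_lt_of_le ha with rfl | ha'
      · have hb1 : b = 1 := by linarith
        rw [hb1]; linarith
      · nlinarith [mul_pos ha' h1, mul_nonneg hb h2.le]
    · simp only [Prod.snd_add, Prod.smul_snd, Pi.add_apply, Pi.smul_apply, smul_eq_mul]
      rw [Finset.sum_add_distrib, ← Finset.mul_sum, ← Finset.mul_sum, hp.2, hq.2]
      linarith
  · intro x hx y hy hxy a b ha hb hab
    obtain ⟨hxpos, hxsum⟩ := hx
    obtain ⟨hypos, hysum⟩ := hy
    have hconv1 : (a • x + b • y).1 = fun e => a * x.1 e + b * y.1 e := by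
      funext e
      simp [Prod.fst_add, Prod.smul_fst, smul_eq_mul]
    have hconv2 : (a • x + b • y).2 = fun i => a * x.2 i + b * y.2 i := by
      funext i
      simp [Prod.snd_add, Prod.smul_snd, smul_eq_mul]
    simp only [hconv1, hconv2, smul_eq_mul]
    rcases eq_or_ne x.2 y.2 with hρτ | hρτ
    · -- same density: kinetic strict
      have hmn : x.1 ≠ y.1 := by
        intro h
        exact hxy (Prod.ext h hρτ)
      have hK := kinetic_combo_lt G x.1 y.1 x.2 hxpos hmn a b ha hb hab
      rw [← hρτ]
      have hfix : (fun i => a * x.2 i + b * x.2 i) = x.2 := by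
        funext i; linear_combination (x.2 i) * hab
      rw [hfix] at hK ⊢
      have hfin : a * (discreteKinetic G x.1 x.2 + c * discreteFisher G x.2)
          + b * (discreteKinetic G y.1 x.2 + c * discreteFisher G x.2)
          = (a * discreteKinetic G x.1 x.2 + b * discreteKinetic G y.1 x.2)
            + c * discreteFisher G x.2 := by
        linear_combination (c * discreteFisher G x.2) * hab
      rw [hfin]
      linarith [hK]
    · have hK := kinetic_combo_le G x.1 y.1 x.2 y.2 hxpos hypos a b ha hb hab
      have hF := fisher_combo_lt G hG x.2 y.2 hxpos hypos hxsum hysum hρτ a b ha hb hab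
      nlinarith [mul_lt_mul_of_pos_left hF hc]
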